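/- If H is a weakly nilpotent hypergroup and T is a closed subset of H, then the quotient hypergroup H//T is weakly nilpotent. -/

import Mathlib

/-- A hypergroup: a set with a hypermultiplication, identity and involution
satisfying (H1), (H2), (H3). -/
structure Hypergroup (H : Type*) where
  hmul : H → H → Set H
  one : H
  star : H → H
  assoc : ∀ p q r : H, (⋃ x ∈ hmul q r, hmul p x) = ⋃ x ∈ hmul p q, hmul x r
  hmul_one : ∀ s : H, hmul s one = {s}
  inv_left : ∀ p q r : H, r ∈ hmul p q → q ∈ hmul (star p) r
  inv_right : ∀ p q r : H, r ∈ hmul p q → p ∈ hmul r (star q)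

namespace Hypergroup

variable {H : Type*} (G : Hypergroup H)

/-- Complex (set) product: `AB = ⋃_{a ∈ A, b ∈ B} ab`. -/
def smul (A B : Set H) : Set H := ⋃ a ∈ A, ⋃ b ∈ B, G.hmul a b

/-- `A* = { a* | a ∈ A }`. -/
def sstar (A : Set H) : Set H := G.star '' A

/-- A nonempty subset `F` is closed if `F*F ⊆ F`. -/
def IsClosed (F : Set H) : Prop := F.Nonempty ∧ G.smul (G.sstar F) F ⊆ F

/-- `F` is normal in `K`: `Fk ⊆ kF` for all `k ∈ K`. -/
def IsNormalIn (F K : Set H) : Prop := ∀ k ∈ K, G.smul F {k} ⊆ G.smul {k} F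

/-- `F` is strongly normal in `K`: `k*Fk ⊆ F` for all `k ∈ K`. -/
def IsStronglyNormalIn (F K : Set H) : Prop :=
  ∀ k ∈ K, G.smul (G.smul {G.star k} F) {k} ⊆ F

/-- An element `s` is thin if `s*s = {1}`. -/
def IsThinElem (s : H) : Prop := G.hmul (G.star s) s = {G.one}

/-- A hypergroup is thin if all elements are thin. -/
def IsThin : Prop := ∀ s : H, G.IsThinElem s

/-- The center `Z(H) = {h | hx = xh for all x, h*h = {1}}`. -/
def center : Set H :=
  {h | (∀ x : H, G.hmul h x = G.hmul x h) ∧ G.hmul (G.star h) h = {G.one}}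

/-- The class `h^F := FhF`. -/
def cls (F : Set H) (h : H) : Set H := G.smul (G.smul F {h}) F

/-- The quotient set `H//F := { h^F | h ∈ H }`. -/
def quotSet (F : Set H) : Set (Set H) := Set.range (G.cls F)

/-- The class `h^F` as an element of `H//F`. -/
def qcls (F : Set H) (h : H) : G.quotSet F := ⟨G.cls F h, h, rfl⟩

/-- The full preimage in `H` of the center of the quotient `H//T`:
`{h | h^T ∈ Z(H//T)}`, i.e. `h^T` commutes with all classes `y^T` and
`(h^T)*(h^T) = {1^T} = {T}`. -/
def qCenterPre (T : Set H) : Set H :=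
  {h | (∀ y : H, G.cls T '' (G.smul (G.smul {h} T) {y}) =
          G.cls T '' (G.smul (G.smul {y} T) {h})) ∧
       G.cls T '' (G.smul (G.smul {G.star h} T) {h}) = {T}}

/-- The upper central series: `Z₀(H) = {1}`, and `Zᵢ₊₁(H)` is the full preimage
of `Z(H//Zᵢ(H))`, i.e. `Zᵢ₊₁(H)//Zᵢ(H) = Z(H//Zᵢ(H))`. -/
def upperCentral : ℕ → Set H
  | 0 => {G.one}
  | n + 1 => G.qCenterPre (upperCentral n)

/-- A hypergroup is weakly nilpotent if `Zₙ(H) = H` for some `n`. -/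
def WeaklyNilpotent : Prop := ∃ n : ℕ, G.upperCentral n = Set.univ

/-- `F` is subnormal in `K` via a chain of successively normal closed subsets. -/
def IsSubnormalIn (F K : Set H) : Prop :=
  ∃ n : ℕ, ∃ C : ℕ → Set H, C 0 = F ∧ C n = K ∧
    ∀ i < n, C i ⊆ C (i + 1) ∧ G.IsClosed (C (i + 1)) ∧ G.IsNormalIn (C i) (C (i + 1))

/-- The quotient `K//N` is thin: `(k^N)*(k^N) = {1^N}` for all `k ∈ K`. -/
def QuotThin (N K : Set H) : Prop :=
  ∀ k ∈ K, G.cls N '' (G.smul (G.smul {G.star k} N) {k}) = {N}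

/-- A residually-thin chain from `{1}` to `K`. -/
def RTChainOn (K : Set H) (n : ℕ) (C : ℕ → Set H) : Prop :=
  C 0 = {G.one} ∧ C n = K ∧
    ∀ i < n, C i ⊆ C (i + 1) ∧ G.IsClosed (C (i + 1)) ∧ G.QuotThin (C i) (C (i + 1))

/-- The valency `n_K = ∏ |Cᵢ₊₁//Cᵢ|` computed along some RT chain for `K`. -/
def HasValencyOn (K : Set H) (m : ℕ) : Prop :=
  ∃ n C, G.RTChainOn K n C ∧
    m = ∏ i ∈ Finset.range n, Nat.card (G.cls (C i) '' C (i + 1))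

/-- A closed `p`-subset: a closed subset whose valency is a power of `p`. -/
def PSubsetOn (p : ℕ) (K : Set H) : Prop :=
  G.IsClosed K ∧ ∃ m k : ℕ, G.HasValencyOn K m ∧ m = p ^ k

/-- `h` is `p`-valenced in `K`: for every subnormal closed `p`-subset `U` of `K`
such that `(h*)^U h^U` consists of thin elements of the quotient,
`n_{(h*)^U h^U} = |(h*)^U h^U|` is a power of `p`. -/
def PValencedElemOn (p : ℕ) (K : Set H) (h : H) : Prop :=
  ∀ U : Set H, G.IsClosed U → U ⊆ K → G.IsSubnormalIn U K → G.PSubsetOn p U →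
    (∀ x ∈ G.smul (G.smul {G.star h} U) {h},
      G.cls U '' (G.smul (G.smul {G.star x} U) {x}) = {U}) →
    ∃ k : ℕ, Nat.card (G.cls U '' (G.smul (G.smul {G.star h} U) {h})) = p ^ k

/-- `K` is `p`-valenced if all its elements are. -/
def PValencedOn (p : ℕ) (K : Set H) : Prop := ∀ h ∈ K, G.PValencedElemOn p K h

end Hypergroup

namespace Hypergroup

variable {H : Type*} (G : Hypergroup H)

lemma self_mem_hmul_one (s : H) : s ∈ G.hmul s G.one := by
  rw [G.hmul_one]; rfl

lemma one_mem_hmul_star_self (s : H) : G.one ∈ G.hmul (G.star s) s :=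
  G.inv_left s G.one s (G.self_mem_hmul_one s)

lemma star_star (s : H) : G.star (G.star s) = s := by
  have h := G.inv_left (G.star s) s G.one (G.one_mem_hmul_star_self s)
  rw [G.hmul_one] at h
  exact h.symm

lemma star_one : G.star G.one = G.one := by
  have h := G.one_mem_hmul_star_self G.one
  rw [G.hmul_one] at h
  exact h.symm

lemma one_mem_hmul_self_star (s : H) : G.one ∈ G.hmul s (G.star s) := by
  have := G.one_mem_hmul_star_self (G.star s)
  rwa [G.star_star] at this

lemma one_hmul (s : H) : G.hmul G.one s = {s} := by
  ext w
  constructor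
  · intro hw
    have h1 : G.one ∈ G.hmul w (G.star s) := G.inv_right G.one s w hw
    have h2 := G.inv_left w (G.star s) G.one h1
    rw [G.hmul_one] at h2
    have : G.star s = G.star w := h2
    have := congrArg G.star this
    rw [G.star_star, G.star_star] at this
    exact this ▸ rfl
  · intro hw
    cases hw
    have h := G.inv_right s (G.star s) G.one (G.one_mem_hmul_self_star s)
    rwa [G.star_star] at h

lemma hmul_nonempty (a b : H) : (G.hmul a b).Nonempty := by
  have h := G.assoc a b (G.star b)
  have ha : a ∈ ⋃ x ∈ G.hmul b (G.star b), G.hmul a x := by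
    refine Set.mem_biUnion (G.one_mem_hmul_self_star b) ?_
    exact G.self_mem_hmul_one a
  rw [h] at ha
  rcases Set.mem_iUnion₂.1 ha with ⟨x, hx, -⟩
  exact ⟨x, hx⟩

lemma star_mem_of_mem {p q r : H} (h : r ∈ G.hmul p q) :
    G.star r ∈ G.hmul (G.star q) (G.star p) := by
  have h1 := G.inv_right p q r h
  have h2 := G.inv_left r (G.star q) p h1
  exact G.inv_right (G.star r) p (G.star q) h2

end Hypergroup
namespace Hypergroup

variable {H : Type*} (G : Hypergroup H)

lemma mem_smul {A B : Set H} {w : H} :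
    w ∈ G.smul A B ↔ ∃ a ∈ A, ∃ b ∈ B, w ∈ G.hmul a b := by
  simp [smul]

lemma hmul_mem_smul {A B : Set H} {a b : H} (ha : a ∈ A) (hb : b ∈ B) :
    G.hmul a b ⊆ G.smul A B := fun w hw => G.mem_smul.2 ⟨a, ha, b, hb, hw⟩

lemma smul_mono {A B A' B' : Set H} (hA : A ⊆ A') (hB : B ⊆ B') :
    G.smul A B ⊆ G.smul A' B' := by
  intro w hw
  rcases G.mem_smul.1 hw with ⟨a, ha, b, hb, h⟩
  exact G.mem_smul.2 ⟨a, hA ha, b, hB hb, h⟩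

lemma smul_assoc (A B C : Set H) :
    G.smul (G.smul A B) C = G.smul A (G.smul B C) := by
  ext w
  constructor
  · intro hw
    rcases G.mem_smul.1 hw with ⟨u, hu, c, hc, hw⟩
    rcases G.mem_smul.1 hu with ⟨a, ha, b, hb, hu⟩
    have : w ∈ ⋃ x ∈ G.hmul a b, G.hmul x c := Set.mem_biUnion hu hw
    rw [← G.assoc a b c] at this
    rcases Set.mem_iUnion₂.1 this with ⟨x, hx, hwx⟩
    exact G.mem_smul.2 ⟨a, ha, x, G.mem_smul.2 ⟨b, hb, c, hc, hx⟩, hwx⟩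
  · intro hw
    rcases G.mem_smul.1 hw with ⟨a, ha, u, hu, hw⟩
    rcases G.mem_smul.1 hu with ⟨b, hb, c, hc, hu⟩
    have : w ∈ ⋃ x ∈ G.hmul b c, G.hmul a x := Set.mem_biUnion hu hw
    rw [G.assoc a b c] at this
    rcases Set.mem_iUnion₂.1 this with ⟨x, hx, hwx⟩
    exact G.mem_smul.2 ⟨x, G.mem_smul.2 ⟨a, ha, b, hb, hx⟩, c, hc, hwx⟩

lemma smul_singleton (a b : H) : G.smul {a} {b} = G.hmul a b := by
  ext w; simp [smul]

lemma smul_one_right (A : Set H) : G.smul A {G.one} = A := by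
  ext w
  constructor
  · intro hw
    rcases G.mem_smul.1 hw with ⟨a, ha, b, hb, h⟩
    cases hb
    rw [G.hmul_one] at h
    cases h; exact ha
  · intro hw
    exact G.mem_smul.2 ⟨w, hw, G.one, rfl, G.self_mem_hmul_one w⟩

lemma smul_one_left (A : Set H) : G.smul {G.one} A = A := by
  ext w
  constructor
  · intro hw
    rcases G.mem_smul.1 hw with ⟨a, ha, b, hb, h⟩
    cases ha
    rw [G.one_hmul] at h
    cases h; exact hb
  · intro hw
    refine G.mem_smul.2 ⟨G.one, rfl, w, hw, ?_⟩
    rw [G.one_hmul]; rfl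

lemma subset_smul_right {A B : Set H} (h1 : G.one ∈ B) : A ⊆ G.smul A B :=
  fun a ha => G.mem_smul.2 ⟨a, ha, G.one, h1, G.self_mem_hmul_one a⟩

lemma subset_smul_left {A B : Set H} (h1 : G.one ∈ A) : B ⊆ G.smul A B :=
  fun b hb => G.mem_smul.2 ⟨G.one, h1, b, hb, by rw [G.one_hmul]; rfl⟩

lemma smul_nonempty {A B : Set H} (hA : A.Nonempty) (hB : B.Nonempty) :
    (G.smul A B).Nonempty := by
  rcases hA with ⟨a, ha⟩; rcases hB with ⟨b, hb⟩
  rcases G.hmul_nonempty a b with ⟨w, hw⟩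
  exact ⟨w, G.mem_smul.2 ⟨a, ha, b, hb, hw⟩⟩

lemma mem_sstar {A : Set H} {w : H} : w ∈ G.sstar A ↔ G.star w ∈ A := by
  constructor
  · rintro ⟨a, ha, rfl⟩; rwa [G.star_star]
  · intro h; exact ⟨G.star w, h, G.star_star w⟩

lemma sstar_smul (A B : Set H) :
    G.sstar (G.smul A B) = G.smul (G.sstar B) (G.sstar A) := by
  ext w
  rw [G.mem_sstar]
  constructor
  · intro hw
    rcases G.mem_smul.1 hw with ⟨a, ha, b, hb, h⟩
    have := G.star_mem_of_mem h
    rw [G.star_star] at this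
    exact G.mem_smul.2 ⟨G.star b, G.mem_sstar.2 (by rwa [G.star_star]),
      G.star a, G.mem_sstar.2 (by rwa [G.star_star]), this⟩
  · intro hw
    rcases G.mem_smul.1 hw with ⟨b, hb, a, ha, h⟩
    have := G.star_mem_of_mem h
    exact G.mem_smul.2 ⟨G.star a, G.mem_sstar.1 ha, G.star b, G.mem_sstar.1 hb, this⟩

lemma sstar_singleton (a : H) : G.sstar {a} = {G.star a} := by
  simp [sstar]

end Hypergroup
namespace Hypergroup

variable {H : Type*} (G : Hypergroup H)

lemma closed_one_mem {T : Set H} (hT : G.IsClosed T) : G.one ∈ T := by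
  rcases hT.1 with ⟨t, ht⟩
  exact hT.2 (G.mem_smul.2 ⟨G.star t, G.mem_sstar.2 (by rwa [G.star_star]), t, ht,
    G.one_mem_hmul_star_self t⟩)

lemma closed_sstar_eq {T : Set H} (hT : G.IsClosed T) : G.sstar T = T := by
  have hsub : G.sstar T ⊆ T := by
    intro w hw
    exact hT.2 (G.mem_smul.2 ⟨w, hw, G.one, G.closed_one_mem hT, G.self_mem_hmul_one w⟩)
  refine Set.Subset.antisymm hsub ?_
  intro t ht
  have : G.star t ∈ G.sstar T := ⟨t, ht, rfl⟩
  exact G.mem_sstar.2 (hsub this)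

lemma closed_star_mem {T : Set H} (hT : G.IsClosed T) {t : H} (ht : t ∈ T) :
    G.star t ∈ T := by
  rw [← G.closed_sstar_eq hT]; exact ⟨t, ht, rfl⟩

lemma closed_smul_self {T : Set H} (hT : G.IsClosed T) : G.smul T T = T := by
  refine Set.Subset.antisymm ?_ (G.subset_smul_left (G.closed_one_mem hT))
  have := hT.2
  rwa [G.closed_sstar_eq hT] at this

lemma self_mem_cls {T : Set H} (h1 : G.one ∈ T) (h : H) : h ∈ G.cls T h := by
  refine G.mem_smul.2 ⟨h, ?_, G.one, h1, G.self_mem_hmul_one h⟩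
  exact G.mem_smul.2 ⟨G.one, h1, h, rfl, by rw [G.one_hmul]; rfl⟩

lemma smul_cls_left {T : Set H} (hT : G.IsClosed T) (a : H) :
    G.smul T (G.cls T a) = G.cls T a := by
  rw [cls, ← G.smul_assoc, ← G.smul_assoc, G.closed_smul_self hT]

lemma cls_smul_right {T : Set H} (hT : G.IsClosed T) (a : H) :
    G.smul (G.cls T a) T = G.cls T a := by
  rw [cls, G.smul_assoc, G.smul_assoc, G.closed_smul_self hT, ← G.smul_assoc]

lemma cls_eq_of_mem {T : Set H} (hT : G.IsClosed T) {h w : H} (hw : w ∈ G.cls T h) :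
    G.cls T w = G.cls T h := by
  have key : ∀ a b : H, b ∈ G.cls T a → a ∈ G.cls T b := by
    intro a b hb
    rcases G.mem_smul.1 hb with ⟨u, hu, t2, ht2, hmem⟩
    rcases G.mem_smul.1 hu with ⟨t1, ht1, a', ha', hmem'⟩
    cases ha'
    have h1 : u ∈ G.hmul b (G.star t2) := G.inv_right u t2 b hmem
    have h2 : a ∈ G.hmul (G.star t1) u := G.inv_left t1 a u hmem'
    rw [cls, G.smul_assoc]
    exact G.mem_smul.2 ⟨G.star t1, G.closed_star_mem hT ht1, u,
      G.mem_smul.2 ⟨b, rfl, G.star t2, G.closed_star_mem hT ht2, h1⟩, h2⟩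
  have sub : ∀ a b : H, b ∈ G.cls T a → G.cls T b ⊆ G.cls T a := by
    intro a b hb
    have h1 : G.cls T b ⊆ G.smul (G.smul T (G.cls T a)) T :=
      G.smul_mono (G.smul_mono (le_refl T) (Set.singleton_subset_iff.2 hb)) (le_refl T)
    rwa [G.smul_cls_left hT, G.cls_smul_right hT] at h1
  exact Set.Subset.antisymm (sub h w hw) (sub w h (key h w hw))

lemma cls_one {T : Set H} (hT : G.IsClosed T) : G.cls T G.one = T := by
  rw [cls, G.smul_one_right, G.closed_smul_self hT]

lemma cls_eq_self_of_mem {T : Set H} (hT : G.IsClosed T) {z : H} (hz : z ∈ T) :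
    G.cls T z = T := by
  have : z ∈ G.cls T G.one := by rw [G.cls_one hT]; exact hz
  rw [G.cls_eq_of_mem hT this, G.cls_one hT]

lemma cls_star {T : Set H} (hT : G.IsClosed T) (s : H) :
    G.cls T (G.star s) = G.sstar (G.cls T s) := by
  rw [cls, cls, G.sstar_smul, G.sstar_smul, G.sstar_singleton, G.closed_sstar_eq hT,
    G.smul_assoc]

end Hypergroup
namespace Hypergroup

variable {H : Type*} (G : Hypergroup H)

lemma sstar_sstar (A : Set H) : G.sstar (G.sstar A) = A := by
  ext w
  rw [G.mem_sstar, G.mem_sstar, G.star_star]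

lemma cls_image_eq_singleton_of_subset {Z S : Set H} (hZ : G.IsClosed Z)
    (hS : S.Nonempty) (hsub : S ⊆ Z) : G.cls Z '' S = {Z} := by
  ext A
  constructor
  · rintro ⟨w, hw, rfl⟩
    exact G.cls_eq_self_of_mem hZ (hsub hw)
  · rintro rfl
    rcases hS with ⟨s, hs⟩
    exact ⟨s, hs, G.cls_eq_self_of_mem hZ (hsub hs)⟩

lemma subset_of_cls_image_eq_singleton {Z S : Set H} (hZ : G.IsClosed Z)
    (h : G.cls Z '' S = {Z}) : S ⊆ Z := by
  intro w hw
  have h1 : G.cls Z w ∈ ({Z} : Set (Set H)) := h ▸ Set.mem_image_of_mem _ hw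
  have h2 : G.cls Z w = Z := h1
  have h3 := G.self_mem_cls (G.closed_one_mem hZ) w
  rwa [h2] at h3

lemma cls_image_sstar {Z : Set H} (hZ : G.IsClosed Z) (S : Set H) :
    G.cls Z '' (G.sstar S) = G.sstar '' (G.cls Z '' S) := by
  unfold sstar
  rw [Set.image_image, Set.image_image]
  exact Set.image_congr fun s _ => (G.cls_star hZ s).symm ▸ rfl

lemma sstar_word (Z : Set H) (hZ : G.IsClosed Z) (x y : H) :
    G.sstar (G.smul (G.smul {x} Z) {y}) = G.smul (G.smul {G.star y} Z) {G.star x} := by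
  rw [G.sstar_smul, G.sstar_smul, G.sstar_singleton, G.sstar_singleton,
    G.closed_sstar_eq hZ, G.smul_assoc]

/-- Conjugation of `Z` by an element of `qCenterPre Z` lands in `Z`. -/
lemma starConj_subset {Z : Set H} {a : H} (hZ : G.IsClosed Z)
    (ha : a ∈ G.qCenterPre Z) : G.smul (G.smul {G.star a} Z) {a} ⊆ Z :=
  G.subset_of_cls_image_eq_singleton hZ ha.2

lemma conjStar_subset {Z : Set H} {a : H} (hZ : G.IsClosed Z)
    (ha : a ∈ G.qCenterPre Z) : G.smul (G.smul {a} Z) {G.star a} ⊆ Z :=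
  G.subset_of_cls_image_eq_singleton hZ ((ha.1 (G.star a)).trans ha.2)

lemma star_mem_qCenterPre {Z : Set H} {a : H} (hZ : G.IsClosed Z)
    (ha : a ∈ G.qCenterPre Z) : G.star a ∈ G.qCenterPre Z := by
  constructor
  · intro y
    have e1 : G.smul (G.smul {G.star a} Z) {y} =
        G.sstar (G.smul (G.smul {G.star y} Z) {a}) := by
      rw [G.sstar_word Z hZ, G.star_star]
    have e2 : G.smul (G.smul {y} Z) {G.star a} =
        G.sstar (G.smul (G.smul {a} Z) {G.star y}) := by
      rw [G.sstar_word Z hZ, G.star_star]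
    rw [e1, e2, G.cls_image_sstar hZ, G.cls_image_sstar hZ, ha.1 (G.star y)]
  · rw [G.star_star]
    exact (ha.1 (G.star a)).trans ha.2

lemma cls_rel_of_mem_sandwich {Z S : Set H} (hZ : G.IsClosed Z) {w : H}
    (hw : w ∈ G.smul (G.smul Z S) Z) : ∃ w' ∈ S, G.cls Z w = G.cls Z w' := by
  rcases G.mem_smul.1 hw with ⟨u, hu, z2, hz2, hw2⟩
  rcases G.mem_smul.1 hu with ⟨z1, hz1, w', hw', hu2⟩
  refine ⟨w', hw', G.cls_eq_of_mem hZ ?_⟩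
  exact G.mem_smul.2 ⟨u, G.mem_smul.2 ⟨z1, hz1, w', rfl, hu2⟩, z2, hz2, hw2⟩

/-- Moving a "central mod Z" element across an element, right-normalized form. -/
lemma central_move {Z : Set H} {a : H} (hZ : G.IsClosed Z)
    (hcomm : ∀ y, G.cls Z '' (G.smul (G.smul {a} Z) {y}) =
      G.cls Z '' (G.smul (G.smul {y} Z) {a})) (s : H) :
    G.smul {a} (G.smul Z {s}) ⊆
      G.smul Z (G.smul {s} (G.smul Z (G.smul {a} Z))) := by
  intro w hw
  have hw' : w ∈ G.smul (G.smul {a} Z) {s} := by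
    rwa [G.smul_assoc]
  have h1 : G.cls Z w ∈ G.cls Z '' (G.smul (G.smul {s} Z) {a}) :=
    hcomm s ▸ Set.mem_image_of_mem _ hw'
  obtain ⟨w', hw'mem, hcls⟩ := h1
  have h0 : w ∈ G.cls Z w := G.self_mem_cls (G.closed_one_mem hZ) w
  rw [← hcls] at h0
  have h2 : w ∈ G.smul (G.smul Z (G.smul (G.smul {s} Z) {a})) Z := by
    refine G.smul_mono (G.smul_mono le_rfl ?_) le_rfl h0
    exact Set.singleton_subset_iff.2 hw'mem
  have e : G.smul (G.smul Z (G.smul (G.smul {s} Z) {a})) Z =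
      G.smul Z (G.smul {s} (G.smul Z (G.smul {a} Z))) := by
    simp only [G.smul_assoc]
  rwa [e] at h2

/-- `central_move` with a right tail. -/
lemma central_moveT {Z : Set H} {a : H} (hZ : G.IsClosed Z)
    (hcomm : ∀ y, G.cls Z '' (G.smul (G.smul {a} Z) {y}) =
      G.cls Z '' (G.smul (G.smul {y} Z) {a})) (s : H) (R : Set H) :
    G.smul {a} (G.smul Z (G.smul {s} R)) ⊆
      G.smul Z (G.smul {s} (G.smul Z (G.smul {a} (G.smul Z R)))) := by
  have e1 : G.smul {a} (G.smul Z (G.smul {s} R)) =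
      G.smul (G.smul {a} (G.smul Z {s})) R := by simp only [G.smul_assoc]
  have e2 : G.smul (G.smul Z (G.smul {s} (G.smul Z (G.smul {a} Z)))) R =
      G.smul Z (G.smul {s} (G.smul Z (G.smul {a} (G.smul Z R)))) := by
    simp only [G.smul_assoc]
  rw [e1, ← e2]
  exact G.smul_mono (G.central_move hZ hcomm s) le_rfl

/-- Conjugating with a pair whose sandwich lies in `Z`, with tail. -/
lemma conjT {Z : Set H} {p q : H}
    (h : G.smul (G.smul {p} Z) {q} ⊆ Z) (R : Set H) :
    G.smul {p} (G.smul Z (G.smul {q} R)) ⊆ G.smul Z R := by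
  have e : G.smul {p} (G.smul Z (G.smul {q} R)) =
      G.smul (G.smul (G.smul {p} Z) {q}) R := by simp only [G.smul_assoc]
  rw [e]
  exact G.smul_mono h le_rfl

lemma smul_ZZ {Z : Set H} (hZ : G.IsClosed Z) (R : Set H) :
    G.smul Z (G.smul Z R) = G.smul Z R := by
  rw [← G.smul_assoc, G.closed_smul_self hZ]

/-- The key computation: a product of two central-mod-Z elements moves across
any `y` modulo `Z`-classes. -/
lemma key_subset {Z : Set H} {a b c : H} (hZ : G.IsClosed Z)
    (ha : a ∈ G.qCenterPre Z) (hb : b ∈ G.qCenterPre Z)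
    (hc : c ∈ G.hmul (G.star a) b) (y : H) :
    G.smul (G.smul {c} Z) {y} ⊆
      G.smul Z (G.smul {y} (G.smul Z (G.smul {c} Z))) := by
  have hb' : b ∈ G.hmul a c := by
    have := G.inv_left (G.star a) b c hc
    rwa [G.star_star] at this
  have ha' := G.star_mem_qCenterPre hZ ha
  calc G.smul (G.smul {c} Z) {y}
      = G.smul {c} (G.smul Z {y}) := G.smul_assoc _ _ _
    _ ⊆ G.smul (G.smul {G.star a} {b}) (G.smul Z {y}) := by
        refine G.smul_mono ?_ le_rfl
        rw [G.smul_singleton]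
        exact Set.singleton_subset_iff.2 hc
    _ = G.smul {G.star a} (G.smul {b} (G.smul Z {y})) := G.smul_assoc _ _ _
    _ ⊆ G.smul {G.star a} (G.smul Z (G.smul {y} (G.smul Z (G.smul {b} Z)))) :=
        G.smul_mono le_rfl (G.central_move hZ hb.1 y)
    _ ⊆ G.smul Z (G.smul {y} (G.smul Z (G.smul {G.star a}
          (G.smul Z (G.smul Z (G.smul {b} Z)))))) :=
        G.central_moveT hZ ha'.1 y (G.smul Z (G.smul {b} Z))
    _ = G.smul Z (G.smul {y} (G.smul Z (G.smul {G.star a}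
          (G.smul Z (G.smul {b} Z))))) := by rw [G.smul_ZZ hZ]
    _ ⊆ G.smul Z (G.smul {y} (G.smul Z (G.smul {G.star a}
          (G.smul Z (G.smul (G.smul {a} {c}) Z))))) := by
        refine G.smul_mono le_rfl (G.smul_mono le_rfl (G.smul_mono le_rfl
          (G.smul_mono le_rfl (G.smul_mono le_rfl (G.smul_mono ?_ le_rfl)))))
        rw [G.smul_singleton]
        exact Set.singleton_subset_iff.2 hb'
    _ = G.smul Z (G.smul {y} (G.smul Z (G.smul {G.star a}
          (G.smul Z (G.smul {a} (G.smul {c} Z)))))) := by simp only [G.smul_assoc]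
    _ ⊆ G.smul Z (G.smul {y} (G.smul Z (G.smul Z (G.smul {c} Z)))) := by
        refine G.smul_mono le_rfl (G.smul_mono le_rfl (G.smul_mono le_rfl ?_))
        exact G.conjT (G.starConj_subset hZ ha) _
    _ = G.smul Z (G.smul {y} (G.smul Z (G.smul {c} Z))) := by
        refine congrArg _ (congrArg _ ?_)
        exact G.smul_ZZ hZ _

lemma key_rel {Z : Set H} {a b c : H} (hZ : G.IsClosed Z)
    (ha : a ∈ G.qCenterPre Z) (hb : b ∈ G.qCenterPre Z)
    (hc : c ∈ G.hmul (G.star a) b) (y : H) {w : H}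
    (hw : w ∈ G.smul (G.smul {c} Z) {y}) :
    ∃ w' ∈ G.smul (G.smul {y} Z) {c}, G.cls Z w = G.cls Z w' := by
  have h1 := G.key_subset hZ ha hb hc y hw
  have e : G.smul Z (G.smul {y} (G.smul Z (G.smul {c} Z))) =
      G.smul (G.smul Z (G.smul (G.smul {y} Z) {c})) Z := by
    simp only [G.smul_assoc]
  rw [e] at h1
  exact G.cls_rel_of_mem_sandwich hZ h1

end Hypergroup
namespace Hypergroup

variable {H : Type*} (G : Hypergroup H)

lemma key_rel' {Z : Set H} {a b c : H} (hZ : G.IsClosed Z)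
    (ha : a ∈ G.qCenterPre Z) (hb : b ∈ G.qCenterPre Z)
    (hc : c ∈ G.hmul (G.star a) b) (y : H) {w : H}
    (hw : w ∈ G.smul (G.smul {y} Z) {c}) :
    ∃ w' ∈ G.smul (G.smul {c} Z) {y}, G.cls Z w = G.cls Z w' := by
  have hcstar : G.star c ∈ G.hmul (G.star b) a := by
    have h := G.star_mem_of_mem hc
    rwa [G.star_star] at h
  have hws : G.star w ∈ G.smul (G.smul {G.star c} Z) {G.star y} := by
    rw [← G.sstar_word Z hZ]
    exact G.mem_sstar.2 (by rwa [G.star_star])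
  obtain ⟨v, hv, hclsv⟩ := G.key_rel hZ hb ha hcstar (G.star y) hws
  refine ⟨G.star v, ?_, ?_⟩
  · have : v ∈ G.sstar (G.smul (G.smul {c} Z) {y}) := by
      rwa [G.sstar_word Z hZ]
    exact G.mem_sstar.1 this
  · have e1 : G.sstar (G.cls Z (G.star w)) = G.cls Z w := by
      rw [G.cls_star hZ, G.sstar_sstar]
    have e2 : G.sstar (G.cls Z v) = G.cls Z (G.star v) := (G.cls_star hZ v).symm
    rw [← e1, ← e2, hclsv]

lemma key_comm {Z : Set H} {a b c : H} (hZ : G.IsClosed Z)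
    (ha : a ∈ G.qCenterPre Z) (hb : b ∈ G.qCenterPre Z)
    (hc : c ∈ G.hmul (G.star a) b) (y : H) :
    G.cls Z '' (G.smul (G.smul {c} Z) {y}) =
      G.cls Z '' (G.smul (G.smul {y} Z) {c}) := by
  ext A
  constructor
  · rintro ⟨w, hw, rfl⟩
    obtain ⟨w', hw', h⟩ := G.key_rel hZ ha hb hc y hw
    exact ⟨w', hw', h.symm⟩
  · rintro ⟨w, hw, rfl⟩
    obtain ⟨w', hw', h⟩ := G.key_rel' hZ ha hb hc y hw
    exact ⟨w', hw', h.symm⟩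

lemma cls_image_smul_left {Z : Set H} (hZ : G.IsClosed Z) (y : H) :
    G.cls Z '' (G.smul Z {y}) = {G.cls Z y} := by
  ext A
  constructor
  · rintro ⟨w, hw, rfl⟩
    rcases G.mem_smul.1 hw with ⟨z, hz, y', hy', hm⟩
    cases hy'
    have h1 : y ∈ G.hmul (G.star z) w := G.inv_left z y w hm
    have h2 : y ∈ G.cls Z w := by
      refine G.subset_smul_right (G.closed_one_mem hZ) ?_
      exact G.mem_smul.2 ⟨G.star z, G.closed_star_mem hZ hz, w, rfl, h1⟩
    exact (G.cls_eq_of_mem hZ h2).symm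
  · rintro rfl
    exact ⟨y, G.subset_smul_left (G.closed_one_mem hZ) rfl, rfl⟩

lemma cls_image_smul_right {Z : Set H} (hZ : G.IsClosed Z) (y : H) :
    G.cls Z '' (G.smul {y} Z) = {G.cls Z y} := by
  ext A
  constructor
  · rintro ⟨w, hw, rfl⟩
    rcases G.mem_smul.1 hw with ⟨y', hy', z, hz, hm⟩
    cases hy'
    have h1 : y ∈ G.hmul w (G.star z) := G.inv_right y z w hm
    have h2 : y ∈ G.cls Z w := by
      refine G.smul_mono (G.subset_smul_left (G.closed_one_mem hZ)) le_rfl ?_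
      exact G.mem_smul.2 ⟨w, rfl, G.star z, G.closed_star_mem hZ hz, h1⟩
    exact (G.cls_eq_of_mem hZ h2).symm
  · rintro rfl
    exact ⟨y, G.subset_smul_right (G.closed_one_mem hZ) rfl, rfl⟩

lemma one_mem_qCenterPre {Z : Set H} (hZ : G.IsClosed Z) :
    G.one ∈ G.qCenterPre Z := by
  constructor
  · intro y
    rw [G.smul_one_left, G.smul_one_right, G.cls_image_smul_left hZ,
      G.cls_image_smul_right hZ]
  · rw [G.star_one, G.smul_one_left, G.smul_one_right]
    exact G.cls_image_eq_singleton_of_subset hZ hZ.1 le_rfl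

lemma closed_qCenterPre {Z : Set H} (hZ : G.IsClosed Z) :
    G.IsClosed (G.qCenterPre Z) := by
  refine ⟨⟨G.one, G.one_mem_qCenterPre hZ⟩, ?_⟩
  intro w hw
  rcases G.mem_smul.1 hw with ⟨x, hx, b, hb, hwm⟩
  have ha : G.star x ∈ G.qCenterPre Z := G.mem_sstar.1 hx
  set a := G.star x with hadef
  have hxa : x = G.star a := by rw [hadef, G.star_star]
  have hwm' : w ∈ G.hmul (G.star a) b := by rwa [← hxa]
  constructor
  · exact G.key_comm hZ ha hb hwm'
  · have hsub : G.smul (G.smul {G.star w} Z) {w} ⊆ Z := by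
      have hwstar : G.star w ∈ G.hmul (G.star b) a := by
        have h := G.star_mem_of_mem hwm'
        rwa [G.star_star] at h
      calc G.smul (G.smul {G.star w} Z) {w}
          ⊆ G.smul (G.smul (G.smul {G.star b} {a}) Z) (G.smul {G.star a} {b}) := by
            refine G.smul_mono (G.smul_mono ?_ le_rfl) ?_
            · rw [G.smul_singleton]; exact Set.singleton_subset_iff.2 hwstar
            · rw [G.smul_singleton]; exact Set.singleton_subset_iff.2 hwm'
        _ = G.smul {G.star b} (G.smul {a} (G.smul Z (G.smul {G.star a} {b}))) := by
            simp only [G.smul_assoc]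
        _ ⊆ G.smul {G.star b} (G.smul Z {b}) := by
            exact G.smul_mono le_rfl (G.conjT (G.conjStar_subset hZ ha) {b})
        _ = G.smul (G.smul {G.star b} Z) {b} := (G.smul_assoc _ _ _).symm
        _ ⊆ Z := G.starConj_subset hZ hb
    refine G.cls_image_eq_singleton_of_subset hZ ?_ hsub
    exact G.smul_nonempty (G.smul_nonempty (Set.singleton_nonempty _) hZ.1)
      (Set.singleton_nonempty _)

lemma closed_upperCentral : ∀ n, G.IsClosed (G.upperCentral n) := by
  intro n
  induction n with
  | zero =>
    refine ⟨⟨G.one, rfl⟩, ?_⟩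
    intro w hw
    rcases G.mem_smul.1 hw with ⟨x, hx, b, hb, hm⟩
    rcases G.mem_sstar.1 hx with h
    cases hb
    have hx1 : x = G.one := by
      have : G.star x = G.one := h
      have := congrArg G.star this
      rwa [G.star_star, G.star_one] at this
    subst hx1
    rw [G.one_hmul] at hm
    exact hm
  | succ n ih => exact G.closed_qCenterPre ih

end Hypergroup
namespace Hypergroup

variable {H : Type*} (G : Hypergroup H)

lemma cls_eq_of_left_mul {B : Set H} (hB : G.IsClosed B) {v w : H}
    (hw : w ∈ G.smul B {v}) : G.cls B w = G.cls B v :=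
  G.cls_eq_of_mem hB (G.subset_smul_right (G.closed_one_mem hB) hw)

lemma cls_eq_of_right_mul {B : Set H} (hB : G.IsClosed B) {v w : H}
    (hw : w ∈ G.smul {v} B) : G.cls B w = G.cls B v := by
  refine G.cls_eq_of_mem hB ?_
  exact G.smul_mono (G.subset_smul_left (G.closed_one_mem hB)) le_rfl hw

lemma cls_subset_cls {Z B : Set H} (hZB : Z ⊆ B) (w : H) :
    G.cls Z w ⊆ G.cls B w :=
  G.smul_mono (G.smul_mono hZB le_rfl) hZB

/-- Coarsening: an element central modulo a closed `Z` is central modulo any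
closed `B ⊇ Z`. -/
lemma qCenterPre_mono {Z B : Set H} (hZ : G.IsClosed Z) (hB : G.IsClosed B)
    (hZB : Z ⊆ B) {h : H} (hh : h ∈ G.qCenterPre Z) : h ∈ G.qCenterPre B := by
  have h1Z := G.closed_one_mem hZ
  have h1B := G.closed_one_mem hB
  have hconj : G.smul (G.smul {G.star h} Z) {h} ⊆ Z :=
    G.subset_of_cls_image_eq_singleton hZ hh.2
  -- a generic one-directional move modulo B
  have move : ∀ p q : H,
      (∀ y, G.cls Z '' (G.smul (G.smul {p} Z) {y}) =
        G.cls Z '' (G.smul (G.smul {y} Z) {p})) →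
      ∀ w ∈ G.smul (G.smul {p} B) {q},
      ∃ w' ∈ G.smul (G.smul {q} B) {p}, G.cls B w = G.cls B w' := by
    intro p q hcomm w hw
    rw [G.smul_assoc] at hw
    rcases G.mem_smul.1 hw with ⟨p', hp', c, hc, hm⟩
    cases hp'
    -- w ∈ hmul p c  with c ∈ smul B {q}
    have hw1 : w ∈ G.smul (G.smul {p} Z) {c} := by
      refine G.smul_mono (G.subset_smul_right h1Z) le_rfl ?_
      rw [G.smul_singleton]
      exact hm
    have h2 : G.cls Z w ∈ G.cls Z '' (G.smul (G.smul {c} Z) {p}) :=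
      hcomm c ▸ Set.mem_image_of_mem _ hw1
    obtain ⟨w'', hw'', hcls⟩ := h2
    have hwmem : w ∈ G.cls B w'' := by
      have h0 : w ∈ G.cls Z w := G.self_mem_cls h1Z w
      rw [← hcls] at h0
      exact G.cls_subset_cls hZB w'' h0
    have hBeq : G.cls B w = G.cls B w'' := G.cls_eq_of_mem hB hwmem
    -- w'' ∈ (c Z p) ⊆ ((B q) B) p = B ((q B) p)
    have hw''2 : w'' ∈ G.smul B (G.smul (G.smul {q} B) {p}) := by
      have hsub : G.smul (G.smul {c} Z) {p} ⊆
          G.smul (G.smul (G.smul B {q}) B) {p} :=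
        G.smul_mono (G.smul_mono (Set.singleton_subset_iff.2 hc) hZB) le_rfl
      have e : G.smul (G.smul (G.smul B {q}) B) {p} =
          G.smul B (G.smul (G.smul {q} B) {p}) := by simp only [G.smul_assoc]
      rw [← e]
      exact hsub hw''
    rcases G.mem_smul.1 hw''2 with ⟨b0, hb0, w''', hw''', hm3⟩
    refine ⟨w''', hw''', ?_⟩
    rw [hBeq]
    refine G.cls_eq_of_left_mul hB ?_
    exact G.mem_smul.2 ⟨b0, hb0, w''', rfl, hm3⟩
  have move' : ∀ p q : H,
      (∀ y, G.cls Z '' (G.smul (G.smul {p} Z) {y}) =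
        G.cls Z '' (G.smul (G.smul {y} Z) {p})) →
      ∀ w ∈ G.smul (G.smul {q} B) {p},
      ∃ w' ∈ G.smul (G.smul {p} B) {q}, G.cls B w = G.cls B w' := by
    intro p q hcomm w hw
    rcases G.mem_smul.1 hw with ⟨c, hc, p', hp', hm⟩
    cases hp'
    -- w ∈ hmul c p with c ∈ smul {q} B
    have hw1 : w ∈ G.smul (G.smul {c} Z) {p} := by
      refine G.smul_mono (G.subset_smul_right h1Z) le_rfl ?_
      rw [G.smul_singleton]
      exact hm
    have h2 : G.cls Z w ∈ G.cls Z '' (G.smul (G.smul {p} Z) {c}) :=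
      (hcomm c).symm ▸ Set.mem_image_of_mem _ hw1
    obtain ⟨w'', hw'', hcls⟩ := h2
    have hwmem : w ∈ G.cls B w'' := by
      have h0 : w ∈ G.cls Z w := G.self_mem_cls h1Z w
      rw [← hcls] at h0
      exact G.cls_subset_cls hZB w'' h0
    have hBeq : G.cls B w = G.cls B w'' := G.cls_eq_of_mem hB hwmem
    -- w'' ∈ (p Z c) ⊆ (p B)(q B) = ((p B) q) B
    have hw''2 : w'' ∈ G.smul (G.smul (G.smul {p} B) {q}) B := by
      have hsub : G.smul (G.smul {p} Z) {c} ⊆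
          G.smul (G.smul {p} B) (G.smul {q} B) :=
        G.smul_mono (G.smul_mono le_rfl hZB) (Set.singleton_subset_iff.2 hc)
      have e : G.smul (G.smul {p} B) (G.smul {q} B) =
          G.smul (G.smul (G.smul {p} B) {q}) B := (G.smul_assoc _ _ _).symm
      rw [← e]
      exact hsub hw''
    rcases G.mem_smul.1 hw''2 with ⟨w''', hw''', b0, hb0, hm3⟩
    refine ⟨w''', hw''', ?_⟩
    rw [hBeq]
    refine G.cls_eq_of_right_mul hB ?_
    exact G.mem_smul.2 ⟨w''', rfl, b0, hb0, hm3⟩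
  constructor
  · intro y
    ext A
    constructor
    · rintro ⟨w, hw, rfl⟩
      obtain ⟨w', hw', h⟩ := move h y hh.1 w hw
      exact ⟨w', hw', h.symm⟩
    · rintro ⟨w, hw, rfl⟩
      obtain ⟨w', hw', h⟩ := move' h y hh.1 w hw
      exact ⟨w', hw', h.symm⟩
  · -- h* B h ⊆ B
    have hsub : G.smul (G.smul {G.star h} B) {h} ⊆ B := by
      intro w hw
      rw [G.smul_assoc] at hw
      rcases G.mem_smul.1 hw with ⟨p', hp', v, hv, hm⟩
      cases hp'
      -- v ∈ smul B {h} : v ∈ hmul b h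
      rcases G.mem_smul.1 hv with ⟨b, hb, h', hh', hm2⟩
      cases hh'
      have hv1 : v ∈ G.smul (G.smul {b} Z) {h} := by
        refine G.smul_mono (G.subset_smul_right h1Z) le_rfl ?_
        rw [G.smul_singleton]
        exact hm2
      have h2 : G.cls Z v ∈ G.cls Z '' (G.smul (G.smul {h} Z) {b}) :=
        (hh.1 b).symm ▸ Set.mem_image_of_mem _ hv1
      obtain ⟨v', hv', hcls⟩ := h2
      have hvmem : v ∈ G.smul (G.smul Z {v'}) Z := by
        have h0 : v ∈ G.cls Z v := G.self_mem_cls h1Z v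
        rw [← hcls] at h0
        exact h0
      -- w ∈ h* (Z (h Z b) Z) = ((((h* Z) h) Z) b) Z
      have hw2 : w ∈ G.smul {G.star h}
          (G.smul (G.smul Z (G.smul (G.smul {h} Z) {b})) Z) := by
        refine G.mem_smul.2 ⟨G.star h, rfl, v, ?_, hm⟩
        exact G.smul_mono (G.smul_mono le_rfl (Set.singleton_subset_iff.2 hv')) le_rfl hvmem
      have e : G.smul {G.star h} (G.smul (G.smul Z (G.smul (G.smul {h} Z) {b})) Z) =
          G.smul (G.smul (G.smul (G.smul (G.smul {G.star h} Z) {h}) Z) {b}) Z := by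
        simp only [G.smul_assoc]
      rw [e] at hw2
      have hsub1 : G.smul (G.smul {G.star h} Z) {h} ⊆ B := fun u hu => hZB (hconj hu)
      have hw3 : w ∈ G.smul (G.smul (G.smul B B) B) B :=
        G.smul_mono (G.smul_mono (G.smul_mono hsub1 hZB)
          (Set.singleton_subset_iff.2 hb)) hZB hw2
      rwa [G.closed_smul_self hB, G.closed_smul_self hB, G.closed_smul_self hB] at hw3
    refine G.cls_image_eq_singleton_of_subset hB ?_ hsub
    exact G.smul_nonempty (G.smul_nonempty (Set.singleton_nonempty _) hB.1)
      (Set.singleton_nonempty _)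

end Hypergroup
/-- if `H` is weakly nilpotent and `T` is closed, then the
quotient hypergroup `H//T` is weakly nilpotent. -/
theorem quotient_weaklyNilpotent {H : Type*} (G : Hypergroup H) (T : Set H)
    (hT : G.IsClosed T) (Q : Hypergroup (G.quotSet T))
    (hmul : ∀ a b : H, Q.hmul (G.qcls T a) (G.qcls T b) =
      {x : G.quotSet T | ∃ y ∈ G.smul (G.smul {a} T) {b}, x = G.qcls T y})
    (hone : Q.one = G.qcls T G.one)
    (hstar : ∀ h : H, Q.star (G.qcls T h) = G.qcls T (G.star h))
    (hG : G.WeaklyNilpotent) :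
    Q.WeaklyNilpotent := by
  obtain ⟨n, hn⟩ := hG
  refine ⟨n, ?_⟩
  have h1T := G.closed_one_mem hT
  -- every element of the quotient is a class
  have hq1 : ∀ q : G.quotSet T, ∃ h : H, q = G.qcls T h := by
    rintro ⟨S, h, rfl⟩
    exact ⟨h, Subtype.ext rfl⟩
  -- multiplication of images
  have himg : ∀ X Y : Set H, Q.smul (G.qcls T '' X) (G.qcls T '' Y) =
      G.qcls T '' (G.smul (G.smul X T) Y) := by
    intro X Y
    ext q
    constructor
    · intro hq
      rcases Q.mem_smul.1 hq with ⟨xb, hxb, yb, hyb, hqm⟩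
      rcases hxb with ⟨x, hx, rfl⟩
      rcases hyb with ⟨y, hy, rfl⟩
      rw [hmul x y] at hqm
      obtain ⟨w, hw, rfl⟩ := hqm
      refine ⟨w, ?_, rfl⟩
      exact G.smul_mono (G.smul_mono (Set.singleton_subset_iff.2 hx) le_rfl)
        (Set.singleton_subset_iff.2 hy) hw
    · rintro ⟨w, hw, rfl⟩
      rcases G.mem_smul.1 hw with ⟨u, hu, y, hy, hm⟩
      rcases G.mem_smul.1 hu with ⟨x, hx, t, ht, hm2⟩
      have hwx : w ∈ G.smul (G.smul {x} T) {y} :=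
        G.mem_smul.2 ⟨u, G.mem_smul.2 ⟨x, rfl, t, ht, hm2⟩, y, rfl, hm⟩
      refine Q.mem_smul.2 ⟨G.qcls T x, ⟨x, hx, rfl⟩, G.qcls T y, ⟨y, hy, rfl⟩, ?_⟩
      rw [hmul x y]
      exact ⟨w, hwx, rfl⟩
  -- the main induction
  have key : ∀ i : ℕ, ∀ h ∈ G.upperCentral i, G.qcls T h ∈ Q.upperCentral i := by
    intro i
    induction i with
    | zero =>
      intro h hh
      cases hh
      show G.qcls T G.one ∈ {Q.one}
      rw [hone]
      rfl
    | succ i ih =>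
      intro h hh
      set W := Q.upperCentral i with hWdef
      set P := {x : H | G.qcls T x ∈ W} with hPdef
      have hWc : Q.IsClosed W := Q.closed_upperCentral i
      have hZc : G.IsClosed (G.upperCentral i) := G.closed_upperCentral i
      have hWP : G.qcls T '' P = W := by
        ext q
        constructor
        · rintro ⟨x, hx, rfl⟩
          exact hx
        · intro hq
          obtain ⟨x, rfl⟩ := hq1 q
          exact ⟨x, hq, rfl⟩
      have hsat : ∀ {w x : H}, G.cls T w = G.cls T x → x ∈ P → w ∈ P := by
        intro w x hw hx
        have : G.qcls T w = G.qcls T x := Subtype.ext hw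
        show G.qcls T w ∈ W
        rw [this]
        exact hx
      have hTPeq : G.smul T P = P := by
        refine Set.Subset.antisymm ?_ (G.subset_smul_left h1T)
        intro w hw
        rcases G.mem_smul.1 hw with ⟨t, ht, p, hp, hm⟩
        refine hsat (G.cls_eq_of_left_mul hT ?_) hp
        exact G.mem_smul.2 ⟨t, ht, p, rfl, hm⟩
      have hPTeq : G.smul P T = P := by
        refine Set.Subset.antisymm ?_ (G.subset_smul_right h1T)
        intro w hw
        rcases G.mem_smul.1 hw with ⟨p, hp, t, ht, hm⟩
        refine hsat (G.cls_eq_of_right_mul hT ?_) hp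
        exact G.mem_smul.2 ⟨p, rfl, t, ht, hm⟩
      -- P is closed
      have hPmem : ∀ {x : H}, x ∈ P ↔ G.qcls T x ∈ W := Iff.rfl
      have hPc : G.IsClosed P := by
        constructor
        · rcases hWc.1 with ⟨q, hq⟩
          obtain ⟨x, rfl⟩ := hq1 q
          exact ⟨x, hq⟩
        · intro w hw
          rcases G.mem_smul.1 hw with ⟨x, hx, p2, hp2, hm⟩
          have hp1 : G.star x ∈ P := G.mem_sstar.1 hx
          have hwq : G.qcls T w ∈ Q.hmul (G.qcls T x) (G.qcls T p2) := by
            rw [hmul x p2]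
            refine ⟨w, ?_, rfl⟩
            exact G.smul_mono (G.subset_smul_right h1T) le_rfl
              (by rw [G.smul_singleton]; exact hm)
          have hxq : G.qcls T x = Q.star (G.qcls T (G.star x)) := by
            rw [hstar, G.star_star]
          rw [hxq] at hwq
          have : G.qcls T w ∈ Q.smul (Q.sstar W) W :=
            Q.mem_smul.2 ⟨Q.star (G.qcls T (G.star x)),
              ⟨G.qcls T (G.star x), hp1, rfl⟩, G.qcls T p2, hp2, hwq⟩
          exact hWc.2 this
      -- coarsen h to modulus P
      have hZP : G.upperCentral i ⊆ P := fun x hx => ih x hx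
      have hhP : h ∈ G.qCenterPre P := G.qCenterPre_mono hZc hPc hZP hh
      -- translate words
      have word : ∀ u v : H, Q.smul (Q.smul {G.qcls T u} W) {G.qcls T v} =
          G.qcls T '' (G.smul (G.smul {u} P) {v}) := by
        intro u v
        have e1 : ({G.qcls T u} : Set (G.quotSet T)) = G.qcls T '' {u} :=
          (Set.image_singleton).symm
        have e2 : ({G.qcls T v} : Set (G.quotSet T)) = G.qcls T '' {v} :=
          (Set.image_singleton).symm
        rw [e1, e2, ← hWP, himg, himg, G.smul_assoc {u} T P, hTPeq,
          G.smul_assoc {u} P T, hPTeq]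
      have cls_word : ∀ z : H, Q.cls W (G.qcls T z) =
          G.qcls T '' (G.cls P z) := by
        intro z
        show Q.smul (Q.smul W {G.qcls T z}) W = _
        have e1 : ({G.qcls T z} : Set (G.quotSet T)) = G.qcls T '' {z} :=
          (Set.image_singleton).symm
        rw [e1, ← hWP, himg, himg, hPTeq, G.smul_assoc (G.smul P {z}) T P, hTPeq]
        rfl
      have imtrans : ∀ S : Set H, Q.cls W '' (G.qcls T '' S) =
          (fun A => G.qcls T '' A) '' (G.cls P '' S) := by
        intro S
        rw [Set.image_image, Set.image_image]
        exact Set.image_congr fun z _ => cls_word z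
      -- conclude
      show G.qcls T h ∈ Q.qCenterPre W
      constructor
      · intro ybar
        obtain ⟨y, rfl⟩ := hq1 ybar
        rw [word h y, word y h, imtrans, imtrans, hhP.1 y]
      · rw [hstar h, word (G.star h) h, imtrans, hhP.2, Set.image_singleton, hWP]
  -- finish
  rw [Set.eq_univ_iff_forall]
  intro q
  obtain ⟨h, rfl⟩ := hq1 q
  exact key n h (hn ▸ Set.mem_univ h)
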